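/- arXiv:2308.15376 — 2 statements merged into one kernel-verified Lean document; each statement's English description precedes it below -/
import Mathlib

section
/- Let Γ be a finite group with |Γ| ≥ 2, generated by a finite symmetric set S = S⁻¹ ⊆ Γ. Then the Cheeger constant satisfies h_S(Γ) ≥ sup_{r ∈ ℕ, r ≥ 1} (1/r)·(1 − |Γ|/(2·γ_S(r))), i.e. h_S(Γ) ≥ U_{ℕ,γ_S}(|Γ|/2). -/
open scoped Pointwise

variable {G : Type*} [Group G] [DecidableEq G]

/-- The ball of radius `r` in the word metric: elements of `G` expressible as
a product of at most `r` elements of `S`. -/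
def wordBall (S : Finset G) : ℕ → Finset G
  | 0 => {1}
  | r + 1 => wordBall S r ∪ S * wordBall S r

/-- The inner boundary of a finite set `D` with respect to the generating set `S`. -/
def innerBoundary (S D : Finset G) : Finset G :=
  D.filter fun x => ∃ s ∈ S, s * x ∉ D


/-- The edge boundary of `D`: unordered pairs `{x, y}` with `x ∈ D`, `y ∉ D` and
`y = s·x` for some `s ∈ S`. -/
def edgeBoundary [Fintype G] (S D : Finset G) : Finset (Sym2 G) :=
  ((D ×ˢ Dᶜ).filter fun p => ∃ s ∈ S, p.2 = s * p.1).image fun p => Sym2.mk p.1 p.2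

/-- The Cheeger constant of a finite group `G` with respect to `S`. -/
noncomputable def cheeger [Fintype G] (S : Finset G) : ℝ :=
  sInf {x : ℝ | ∃ D : Finset G, 0 < D.card ∧ 2 * D.card ≤ Fintype.card G ∧
    x = ((edgeBoundary S D).card : ℝ) / (D.card : ℝ)}

lemma one_mem_wordBall (S : Finset G) : ∀ r, (1:G) ∈ wordBall S r
  | 0 => by simp [wordBall]
  | r + 1 => by simp [wordBall, one_mem_wordBall S r]

lemma smul_sdiff_card_le [Fintype G] (S D : Finset G) {s : G} (hs : s ∈ S) :
    ((s • D) \ D).card ≤ (edgeBoundary S D).card := by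
  apply Finset.card_le_card_of_injOn (fun y => Sym2.mk (s⁻¹ * y) y)
  · intro y hy
    rw [Finset.mem_coe, Finset.mem_sdiff] at hy
    obtain ⟨hy1, hy2⟩ := hy
    have hx : s⁻¹ * y ∈ D := by
      rw [Finset.mem_smul_finset] at hy1
      obtain ⟨x, hx, rfl⟩ := hy1
      simpa using hx
    rw [Finset.mem_coe, edgeBoundary, Finset.mem_image]
    exact ⟨(s⁻¹ * y, y), Finset.mem_filter.2 ⟨Finset.mem_product.2
      ⟨hx, Finset.mem_compl.2 hy2⟩, ⟨s, hs, by group⟩⟩, rfl⟩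
  · intro y hy y' hy' h
    rw [Finset.mem_coe, Finset.mem_sdiff] at hy hy'
    have hxy : s⁻¹ * y ∈ D := by
      have hy1 := hy.1
      rw [Finset.mem_smul_finset] at hy1
      obtain ⟨x, hx, rfl⟩ := hy1
      simpa using hx
    rcases Sym2.eq_iff.1 h with ⟨h1, h2⟩ | ⟨h1, h2⟩
    · exact h2
    · exact absurd (h1 ▸ hxy) hy'.2

lemma smul_diff_le [Fintype G] (S D : Finset G) :
    ∀ r, ∀ g ∈ wordBall S r, ((g • D) \ D).card ≤ r * (edgeBoundary S D).card := by
  intro r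
  induction r with
  | zero =>
    intro g hg
    simp only [wordBall, Finset.mem_singleton] at hg
    subst hg
    simp
  | succ r ih =>
    intro g hg
    rw [wordBall, Finset.mem_union] at hg
    rcases hg with hg | hg
    · calc ((g • D) \ D).card ≤ r * (edgeBoundary S D).card := ih g hg
        _ ≤ (r+1) * (edgeBoundary S D).card := by nlinarith
    · rw [Finset.mem_mul] at hg
      obtain ⟨s, hs, h, hh, rfl⟩ := hg
      have hsub : ((s * h) • D) \ D ⊆ (((s*h) • D) \ (s • D)) ∪ ((s • D) \ D) := by
        intro x hx
        rw [Finset.mem_sdiff] at hx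
        rw [Finset.mem_union, Finset.mem_sdiff, Finset.mem_sdiff]
        by_cases hxs : x ∈ s • D
        · exact Or.inr ⟨hxs, hx.2⟩
        · exact Or.inl ⟨hx.1, hxs⟩
      have h1 : (((s*h) • D) \ (s • D)).card ≤ r * (edgeBoundary S D).card := by
        have : ((s*h) • D) \ (s • D) = s • ((h • D) \ D) := by
          rw [Finset.smul_finset_sdiff, mul_smul]
        rw [this, Finset.card_smul_finset]
        exact ih h hh
      calc (((s*h) • D) \ D).card ≤ ((((s*h) • D) \ (s • D)) ∪ ((s • D) \ D)).card :=
            Finset.card_le_card hsub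
        _ ≤ (((s*h) • D) \ (s • D)).card + ((s • D) \ D).card := Finset.card_union_le _ _
        _ ≤ r * (edgeBoundary S D).card + (edgeBoundary S D).card :=
            Nat.add_le_add h1 (smul_sdiff_card_le S D hs)
        _ = (r+1) * (edgeBoundary S D).card := by ring

lemma sum_inter_card [Fintype G] (D : Finset G) :
    ∑ g : G, (D ∩ g • D).card = D.card * D.card := by
  have key : ∀ g : G, D ∩ g • D = D.filter (fun x => g⁻¹ * x ∈ D) := by
    intro g
    ext x
    simp only [Finset.mem_inter, Finset.mem_filter, Finset.mem_smul_finset]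
    constructor
    · rintro ⟨hx, y, hy, rfl⟩; exact ⟨hx, by simpa using hy⟩
    · rintro ⟨hx, hy⟩; exact ⟨hx, g⁻¹ * x, hy, by simp⟩
  simp only [key, Finset.card_filter]
  rw [Finset.sum_comm]
  have : ∀ x ∈ D, (∑ g : G, if g⁻¹ * x ∈ D then 1 else 0) = D.card := by
    intro x _
    rw [← Finset.card_filter]
    apply Finset.card_bij (fun g _ => g⁻¹ * x)
    · intro g hg; simpa using (Finset.mem_filter.1 hg).2
    · intro a ha b hb hab
      simpa using mul_right_cancel hab
    · intro d hd
      exact ⟨x * d⁻¹, by simp [hd], by group⟩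
  rw [Finset.sum_congr rfl this]
  simp [mul_comm]

theorem stmt3 [Fintype G] (S : Finset G)
    (hsymm : ∀ s ∈ S, s⁻¹ ∈ S) (hgen : Subgroup.closure (S : Set G) = ⊤)
    (hcard : 2 ≤ Fintype.card G) :
    (⨆ r : {r : ℕ // 1 ≤ r},
        (1 / ((r : ℕ) : ℝ)) *
          (1 - (Fintype.card G : ℝ) / (2 * ((wordBall S (r : ℕ)).card : ℝ))))
      ≤ cheeger S := by
  have : Nonempty {r : ℕ // 1 ≤ r} := ⟨⟨1, le_refl 1⟩⟩
  apply ciSup_le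
  rintro ⟨r, hr⟩
  apply le_csInf
  · refine ⟨(edgeBoundary S ({1} : Finset G)).card / (({1} : Finset G).card : ℝ),
      ({1} : Finset G), by simp, by simpa using hcard, rfl⟩
  · rintro x ⟨D, hD, hDn, rfl⟩
    -- notation
    set b := (wordBall S r).card with hbdef
    set d := D.card with hddef
    set e := (edgeBoundary S D).card with hedef
    have hb1 : 1 ≤ b := Finset.card_pos.2 ⟨1, one_mem_wordBall S r⟩
    -- key nat inequality : b * d ≤ d * d + b * (r * e)
    have hnat : b * d ≤ d * d + b * (r * e) := by
      have hterm : ∀ g ∈ wordBall S r, d ≤ (D ∩ g • D).card + r * e := by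
        intro g hg
        have h1 : ((g • D) \ D).card + (g • D ∩ D).card = (g • D).card :=
          Finset.card_sdiff_add_card_inter _ _
        have h2 : (g • D).card = d := Finset.card_smul_finset g D
        have h3 : (g • D ∩ D).card = (D ∩ g • D).card := by rw [Finset.inter_comm]
        have h4 : ((g • D) \ D).card ≤ r * e := smul_diff_le S D r g hg
        omega
      calc b * d = ∑ _g ∈ wordBall S r, d := by rw [Finset.sum_const, smul_eq_mul]
        _ ≤ ∑ g ∈ wordBall S r, ((D ∩ g • D).card + r * e) := Finset.sum_le_sum hterm
        _ = (∑ g ∈ wordBall S r, (D ∩ g • D).card) + b * (r * e) := by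
            rw [Finset.sum_add_distrib, Finset.sum_const, smul_eq_mul]
        _ ≤ (∑ g : G, (D ∩ g • D).card) + b * (r * e) := by
            gcongr
            exact Finset.subset_univ _
        _ = d * d + b * (r * e) := by rw [sum_inter_card]
    -- real arithmetic
    have hrR : (0:ℝ) < (r:ℝ) := by exact_mod_cast hr
    have hdR : (0:ℝ) < (d:ℝ) := by exact_mod_cast hD
    have hbR : (0:ℝ) < (b:ℝ) := by exact_mod_cast hb1
    have heR : (0:ℝ) ≤ (e:ℝ) := Nat.cast_nonneg e
    have hnatR : (b:ℝ) * d ≤ d * d + b * (r * e) := by exact_mod_cast hnat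
    have hDnR : 2 * (d:ℝ) ≤ Fintype.card G := by exact_mod_cast hDn
    rw [one_div_mul_eq_div, div_le_div_iff₀ hrR hdR]
    have hkey : (1 - (Fintype.card G : ℝ) / (2 * b)) * d * (2 * b) =
        2 * b * d - (Fintype.card G : ℝ) * d := by
      field_simp
    rw [← mul_le_mul_iff_left₀ (show (0:ℝ) < 2 * b by linarith)]
    rw [hkey]
    nlinarith [mul_le_mul_of_nonneg_right hDnR hdR.le]
end

section
/- Let Γ be a group generated by a finite symmetric set S = S⁻¹ ⊆ Γ, and let g : (0,∞) → (0,∞) be a strictly increasing differentiable function with tame superpolynomial growth (TSPG) such that γ_S(r−1) ≥ g(r) for every integer r ≥ 1. Then for every ε ∈ (0,1) there exists N ∈ ℕ such that for every finite subset D ⊆ Γ with |D| ≥ N and every real s > 0 with g(s) ≥ |D|, one has |∂_S D| / |D| ≥ (1−ε)/s (equivalently, |∂_S D|/|D| ≥ (1−ε)/g⁻¹(|D|)). -/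
open scoped Pointwise

variable {G : Type*} [Group G] [DecidableEq G]

lemma sdiff_smul_subset (S D : Finset G) (hsymm : ∀ s ∈ S, s⁻¹ ∈ S)
    {s : G} (hs : s ∈ S) : D \ s • D ⊆ innerBoundary S D := by
  intro x hx
  rw [Finset.mem_sdiff] at hx
  rw [innerBoundary, Finset.mem_filter]
  refine ⟨hx.1, s⁻¹, hsymm s hs, fun h => hx.2 ?_⟩
  rw [Finset.mem_smul_finset]
  exact ⟨s⁻¹ * x, h, by rw [smul_eq_mul]; group⟩

lemma card_sdiff_smul_le (S D : Finset G) (hsymm : ∀ s ∈ S, s⁻¹ ∈ S) :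
    ∀ r : ℕ, ∀ y ∈ wordBall S r, (D \ y • D).card ≤ r * (innerBoundary S D).card := by
  intro r
  induction r with
  | zero =>
    intro y hy
    simp only [wordBall, Finset.mem_singleton] at hy
    subst hy
    simp
  | succ n ih =>
    intro y hy
    rw [wordBall, Finset.mem_union] at hy
    rcases hy with hy | hy
    · exact (ih y hy).trans (Nat.mul_le_mul_right _ (Nat.le_succ n))
    · rw [Finset.mem_mul] at hy
      obtain ⟨s, hs, z, hz, rfl⟩ := hy
      have hsub : D \ (s * z) • D ⊆ (D \ s • D) ∪ s • (D \ z • D) := by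
        intro x hx
        rw [Finset.mem_sdiff] at hx
        rw [Finset.mem_union]
        by_cases hxs : x ∈ s • D
        · right
          rw [Finset.mem_smul_finset] at hxs ⊢
          obtain ⟨w, hw, rfl⟩ := hxs
          refine ⟨w, ?_, rfl⟩
          rw [Finset.mem_sdiff]
          refine ⟨hw, fun hwz => hx.2 ?_⟩
          rw [mul_smul, Finset.mem_smul_finset]
          exact ⟨w, hwz, rfl⟩
        · left; exact Finset.mem_sdiff.2 ⟨hx.1, hxs⟩
      calc (D \ (s * z) • D).card ≤ ((D \ s • D) ∪ s • (D \ z • D)).card :=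
            Finset.card_le_card hsub
        _ ≤ (D \ s • D).card + (s • (D \ z • D)).card := Finset.card_union_le _ _
        _ ≤ (innerBoundary S D).card + (D \ z • D).card := by
            rw [Finset.card_smul_finset]
            exact Nat.add_le_add_right
              (Finset.card_le_card (sdiff_smul_subset S D hsymm hs)) _
        _ ≤ (innerBoundary S D).card + n * (innerBoundary S D).card :=
            Nat.add_le_add_left (ih z hz) _
        _ = (n + 1) * (innerBoundary S D).card := by ring

lemma sum_card_inter_le (B D : Finset G) :
    (∑ y ∈ B, (D ∩ y • D).card) ≤ D.card * D.card := by
  rw [← Finset.card_sigma]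
  calc (B.sigma fun y => D ∩ y • D).card ≤ (D ×ˢ D).card := by
        apply Finset.card_le_card_of_injOn (fun p => (p.2, p.1⁻¹ * p.2))
        · intro p hp
          rw [Finset.mem_coe, Finset.mem_sigma] at hp
          obtain ⟨hp1, hp2⟩ := hp
          rw [Finset.mem_inter] at hp2
          rw [Finset.mem_coe, Finset.mem_product]
          refine ⟨hp2.1, ?_⟩
          obtain ⟨w, hw, hwx⟩ := Finset.mem_smul_finset.1 hp2.2
          have hweq : p.fst⁻¹ * p.snd = w := by rw [← hwx, smul_eq_mul]; group
          show p.fst⁻¹ * p.snd ∈ D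
          rw [hweq]; exact hw
        · rintro ⟨y1, x1⟩ hp ⟨y2, x2⟩ hq hpq
          simp only [Prod.mk.injEq] at hpq
          obtain ⟨h1, h2⟩ := hpq
          subst h1
          have hy : y1 = y2 := inv_injective (mul_right_cancel h2)
          subst hy
          rfl
    _ = D.card * D.card := Finset.card_product D D

lemma key_count (S D : Finset G) (hsymm : ∀ s ∈ S, s⁻¹ ∈ S) (r : ℕ) :
    (wordBall S r).card * D.card ≤
      D.card * D.card + (wordBall S r).card * (r * (innerBoundary S D).card) := by
  calc (wordBall S r).card * D.card = ∑ _y ∈ wordBall S r, D.card := by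
        rw [Finset.sum_const, smul_eq_mul]
    _ = ∑ y ∈ wordBall S r, ((D ∩ y • D).card + (D \ y • D).card) := by
        refine Finset.sum_congr rfl fun y _ => ?_
        rw [Finset.card_inter_add_card_sdiff]
    _ ≤ (∑ y ∈ wordBall S r, (D ∩ y • D).card)
          + ∑ _y ∈ wordBall S r, r * (innerBoundary S D).card := by
        rw [Finset.sum_add_distrib]
        exact Nat.add_le_add_left
          (Finset.sum_le_sum fun y hy => card_sdiff_smul_le S D hsymm r y hy) _
    _ ≤ D.card * D.card + (wordBall S r).card * (r * (innerBoundary S D).card) := by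
        rw [Finset.sum_const, smul_eq_mul]
        exact Nat.add_le_add_right (sum_card_inter_le _ _) _

lemma tendsto_ratio_aux (g g' : ℝ → ℝ) (hgpos : ∀ r : ℝ, 0 < r → 0 < g r)
    (hg'pos : ∀ r : ℝ, 0 < r → 0 < g' r)
    (htop : Filter.Tendsto (fun r => r * g' r / g r) Filter.atTop Filter.atTop)
    {lam : ℝ}
    (hzero : Filter.Tendsto (fun r => r * g' r * g (lam * r) / (g r) ^ 2)
      Filter.atTop (nhds 0)) :
    Filter.Tendsto (fun r => g (lam * r) / g r) Filter.atTop (nhds 0) := by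
  have h := hzero.div_atTop htop
  apply h.congr'
  filter_upwards [Filter.eventually_gt_atTop (0:ℝ)] with r hr
  have hg := (hgpos r hr).ne'
  have hg' := (hg'pos r hr).ne'
  field_simp

set_option maxHeartbeats 1000000 in
theorem stmt12 (S : Finset G)
    (hsymm : ∀ s ∈ S, s⁻¹ ∈ S) (hgen : Subgroup.closure (S : Set G) = ⊤)
    (g g' : ℝ → ℝ) (hgpos : ∀ r : ℝ, 0 < r → 0 < g r)
    (hmono : StrictMonoOn g (Set.Ioi 0))
    (hderiv : ∀ r : ℝ, 0 < r → HasDerivAt g (g' r) r)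
    (hg'pos : ∀ r : ℝ, 0 < r → 0 < g' r)
    (htame_top : Filter.Tendsto (fun r => r * g' r / g r) Filter.atTop Filter.atTop)
    (htame_zero : ∀ lam : ℝ, 0 < lam → lam < 1 →
      Filter.Tendsto (fun r => r * g' r * g (lam * r) / (g r) ^ 2)
        Filter.atTop (nhds 0))
    (hgrowth : ∀ r : ℕ, 1 ≤ r → g r ≤ ((wordBall S (r - 1)).card : ℝ))
    (ε : ℝ) (hε0 : 0 < ε) (hε1 : ε < 1) :
    ∃ N : ℕ, ∀ D : Finset G, N ≤ D.card →
      ∀ s : ℝ, 0 < s → (D.card : ℝ) ≤ g s →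
        (1 - ε) / s ≤ ((innerBoundary S D).card : ℝ) / (D.card : ℝ) := by
  set lam : ℝ := 1 - ε / 2 with hlam_def
  have hlam0 : 0 < lam := by simp only [hlam_def]; linarith
  have hlam1 : lam < 1 := by simp only [hlam_def]; linarith
  have hratio : Filter.Tendsto (fun r => g (lam * r) / g r) Filter.atTop (nhds 0) :=
    tendsto_ratio_aux g g' hgpos hg'pos htame_top (htame_zero lam hlam0 hlam1)
  have hev : ∀ᶠ u in Filter.atTop, g (lam * u) / g u < ε / 4 := by
    have : Set.Iio (ε / 4) ∈ nhds (0:ℝ) := Iio_mem_nhds (by linarith)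
    exact hratio.eventually this
  obtain ⟨M, hM⟩ := Filter.eventually_atTop.1 hev
  set s0 : ℝ := max (max M (4 / ε)) 1 with hs0_def
  have hs0pos : 0 < s0 := lt_of_lt_of_le one_pos (le_max_right _ _)
  refine ⟨⌈g s0⌉₊ + 1, ?_⟩
  intro D hD s hs hgs
  have hd0 : 0 < D.card := by omega
  have hdR : (0:ℝ) < (D.card : ℝ) := by exact_mod_cast hd0
  -- g s0 < D.card ≤ g s, hence s0 < s
  have hgs0_lt : g s0 < (D.card : ℝ) := by
    have h1 : g s0 ≤ (⌈g s0⌉₊ : ℝ) := Nat.le_ceil _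
    have h2 : (⌈g s0⌉₊ + 1 : ℕ) ≤ D.card := hD
    have : ((⌈g s0⌉₊ : ℝ) + 1) ≤ (D.card : ℝ) := by exact_mod_cast h2
    linarith
  have hss0 : s0 < s := by
    by_contra hc
    push_neg at hc
    have : g s ≤ g s0 := by
      rcases eq_or_lt_of_le hc with h | h
      · rw [h]
      · exact le_of_lt (hmono (Set.mem_Ioi.2 hs) (Set.mem_Ioi.2 hs0pos) h)
    linarith
  have hsM : M < s := lt_of_le_of_lt (le_trans (le_max_left _ _) (le_max_left _ _)) hss0
  have hsε : 4 / ε < s := lt_of_le_of_lt (le_trans (le_max_right _ _) (le_max_left _ _)) hss0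
  have hs1 : 1 < s := lt_of_le_of_lt (le_max_right _ _) hss0
  have hsε' : 4 ≤ s * ε := by
    rw [div_lt_iff₀ hε0] at hsε
    linarith
  -- set up r
  set r : ℕ := ⌈s / lam⌉₊ with hr_def
  have hsl_pos : 0 < s / lam := div_pos hs hlam0
  have hr_ge : s / lam ≤ (r : ℝ) := Nat.le_ceil _
  have hr_lt : (r : ℝ) < s / lam + 1 := Nat.ceil_lt_add_one hsl_pos.le
  have hrpos : (0:ℝ) < (r : ℝ) := lt_of_lt_of_le hsl_pos hr_ge
  -- u := r + 1
  set u : ℝ := (r : ℝ) + 1 with hu_def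
  have hupos : 0 < u := by linarith
  have hs_le_lamu : s ≤ lam * u := by
    have : s = lam * (s / lam) := by field_simp
    rw [this]
    have : s / lam ≤ u := by linarith
    nlinarith
  have hsu : s < u := by
    have : s ≤ s / lam := by
      rw [le_div_iff₀ hlam0]; nlinarith
    linarith
  have huM : M ≤ u := le_of_lt (lt_trans hsM hsu)
  have hηu : g (lam * u) / g u < ε / 4 := hM u huM
  -- volume lower bound
  have hv : g u ≤ ((wordBall S r).card : ℝ) := by
    have := hgrowth (r + 1) (by omega)
    simpa [hu_def, Nat.add_sub_cancel] using this
  have hgu_pos : 0 < g u := hgpos u hupos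
  have hvR : (0:ℝ) < ((wordBall S r).card : ℝ) := lt_of_lt_of_le hgu_pos hv
  -- d / v ≤ g(lam u)/g(u) < ε/4
  have hd_le : (D.card : ℝ) ≤ g (lam * u) := by
    have hlamu_pos : 0 < lam * u := by positivity
    have : g s ≤ g (lam * u) := by
      rcases eq_or_lt_of_le hs_le_lamu with h | h
      · rw [h]
      · exact le_of_lt (hmono (Set.mem_Ioi.2 hs) (Set.mem_Ioi.2 hlamu_pos) h)
    linarith
  have hdv : (D.card : ℝ) / ((wordBall S r).card : ℝ) < ε / 4 := by
    have h1 : (D.card : ℝ) / ((wordBall S r).card : ℝ) ≤ g (lam * u) / g u :=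
      div_le_div₀ (hgpos (lam * u) (by positivity)).le hd_le hgu_pos hv
    linarith
  -- the counting inequality, cast to ℝ
  have hcount := key_count S D hsymm r
  have hcountR : ((wordBall S r).card : ℝ) * (D.card : ℝ) ≤
      (D.card : ℝ) * (D.card : ℝ) +
        ((wordBall S r).card : ℝ) * ((r : ℝ) * ((innerBoundary S D).card : ℝ)) := by
    exact_mod_cast hcount
  set b : ℝ := ((innerBoundary S D).card : ℝ) with hb_def
  set v : ℝ := ((wordBall S r).card : ℝ) with hv_def
  set d : ℝ := (D.card : ℝ) with hd_def
  have hbnn : 0 ≤ b := by positivity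
  -- step 1 : (1 - d/v)/r ≤ b/d
  have step1 : (1 - d / v) / (r : ℝ) ≤ b / d := by
    rw [div_le_div_iff₀ hrpos hdR]
    have h2 : v * d ≤ d * d + v * ((r:ℝ) * b) := hcountR
    have h3 : (v - d) * d ≤ b * (r:ℝ) * v := by ring_nf; ring_nf at h2; linarith
    calc (1 - d / v) * d = ((v - d) * d) / v := by field_simp
      _ ≤ (b * (r:ℝ) * v) / v := (div_le_div_iff_of_pos_right hvR).2 h3
      _ = b * (r:ℝ) := mul_div_cancel_right₀ _ hvR.ne'
  -- step 2 : (1 - ε/4)/r ≤ (1 - d/v)/r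
  have step2 : (1 - ε / 4) / (r : ℝ) ≤ (1 - d / v) / (r : ℝ) :=
    (div_le_div_iff_of_pos_right hrpos).2 (by linarith)
  -- step 3 : (1 - ε)/s ≤ (1 - ε/4)/r
  have step3 : (1 - ε) / s ≤ (1 - ε / 4) / (r : ℝ) := by
    rw [div_le_div_iff₀ hs hrpos]
    have hrl : (r : ℝ) * lam ≤ s + lam := by
      have h := mul_lt_mul_of_pos_right hr_lt hlam0
      have heq : (s / lam + 1) * lam = s + lam := by field_simp
      rw [heq] at h
      exact h.le
    have hc1 : (0:ℝ) ≤ 1 - ε := by linarith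
    have key1 : (1 - ε) * ((r:ℝ) * lam) ≤ (1 - ε) * (s + lam) :=
      mul_le_mul_of_nonneg_left hrl hc1
    have key2 : (1 - ε) * (s + lam) ≤ (1 - ε / 4) * s * lam := by
      rw [hlam_def]
      nlinarith [hsε', mul_nonneg (mul_nonneg hε0.le hε0.le) hs.le,
        mul_nonneg hε0.le (by linarith : (0:ℝ) ≤ 1 - ε)]
    have key : ((1 - ε) * (r:ℝ)) * lam ≤ ((1 - ε / 4) * s) * lam := by
      calc ((1 - ε) * (r:ℝ)) * lam = (1 - ε) * ((r:ℝ) * lam) := by ring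
        _ ≤ (1 - ε) * (s + lam) := key1
        _ ≤ (1 - ε / 4) * s * lam := key2
    exact le_of_mul_le_mul_right key hlam0
  linarith
end
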